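/- Let n, m, d, d^⊥ be positive integers with 1 ≤ m ≤ n−1, d ≥ 1, d^⊥ ≥ 1. If ((2^m − 1)/(2^n − 1)) · Σ_{i=1}^{d−1} C(n,i) + ((2^{n−m} − 1)/(2^n − 1)) · Σ_{i=1}^{d^⊥−1} C(n,i) < 1, then there exists an m-dimensional linear subspace C of GF(2)^n whose minimum Hamming distance is at least d and whose dual distance is at least d^⊥. -/

import Mathlib

/-- The dual code of a binary linear code `C ⊆ GF(2)^n`. -/
def dualCode {n : ℕ} (C : Submodule (ZMod 2) (Fin n → ZMod 2)) :
    Submodule (ZMod 2) (Fin n → ZMod 2) where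
  carrier := {u | ∀ v ∈ C, dotProduct u v = 0}
  zero_mem' := by intro v _; simp
  add_mem' := by
    intro a b ha hb v hv
    rw [Set.mem_setOf_eq] at *
    rw [add_dotProduct, ha v hv, hb v hv, add_zero]
  smul_mem' := by
    intro c u hu v hv
    rw [Set.mem_setOf_eq] at *
    rw [smul_dotProduct, hu v hv, smul_zero]

/-- The minimum Hamming distance of the code `C` is at least `d`. -/
def MinDistGE {n : ℕ} (C : Submodule (ZMod 2) (Fin n → ZMod 2)) (d : ℕ) : Prop :=
  ∀ c ∈ C, c ≠ 0 → d ≤ hammingNorm c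

open Module Finset

namespace GVAux

/-- The dot-product bilinear form on `GF(2)^n`. -/
noncomputable def Bf (n : ℕ) : LinearMap.BilinForm (ZMod 2) (Fin n → ZMod 2) :=
  LinearMap.mk₂ (ZMod 2) (fun x y => dotProduct x y)
    (fun x y z => add_dotProduct x y z) (fun c x y => smul_dotProduct c x y)
    (fun x y z => dotProduct_add x y z) (fun c x y => dotProduct_smul c x y)

variable {n : ℕ}

lemma Bf_apply (x y : Fin n → ZMod 2) : Bf n x y = dotProduct x y := rfl

lemma Bf_refl : (Bf n).IsRefl := fun x y h => by
  rw [Bf_apply, dotProduct_comm]; exact h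

lemma Bf_nondeg : (Bf n).Nondegenerate := by
  constructor
  · intro v h
    funext i
    have := h (Pi.single i 1)
    rw [Bf_apply] at this
    simpa [dotProduct_single] using this
  · intro v h
    funext i
    have := h (Pi.single i 1)
    rw [Bf_apply] at this
    simpa [single_dotProduct] using this

lemma finrank_V : finrank (ZMod 2) (Fin n → ZMod 2) = n := by
  simp [Module.finrank_pi]

lemma mem_dualCode {C : Submodule (ZMod 2) (Fin n → ZMod 2)} {u : Fin n → ZMod 2} :
    u ∈ dualCode C ↔ ∀ v ∈ C, dotProduct u v = 0 := Iff.rfl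

lemma dualCode_eq (C : Submodule (ZMod 2) (Fin n → ZMod 2)) :
    dualCode C = (Bf n).orthogonal C := by
  ext u
  rw [mem_dualCode, LinearMap.BilinForm.mem_orthogonal_iff]
  constructor
  · intro h v hv
    exact Bf_refl _ _ (h v hv)
  · intro h v hv
    exact Bf_refl _ _ (h v hv)

lemma finrank_dualCode (C : Submodule (ZMod 2) (Fin n → ZMod 2)) :
    finrank (ZMod 2) (dualCode C) = n - finrank (ZMod 2) C := by
  rw [dualCode_eq, LinearMap.BilinForm.finrank_orthogonal Bf_nondeg, finrank_V]

lemma mem_dualCode_iff_le_ker {C : Submodule (ZMod 2) (Fin n → ZMod 2)}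
    {v : Fin n → ZMod 2} : v ∈ dualCode C ↔ C ≤ LinearMap.ker (Bf n v) := by
  rw [mem_dualCode]
  constructor
  · intro h c hc
    exact LinearMap.mem_ker.mpr (h c hc)
  · intro h c hc
    exact LinearMap.mem_ker.mp (h hc)

lemma finrank_ker_Bf {v : Fin n → ZMod 2} (hv : v ≠ 0) :
    finrank (ZMod 2) (LinearMap.ker (Bf n v)) = n - 1 := by
  have hex : ∃ i, v i ≠ 0 := by
    by_contra hc
    push_neg at hc
    exact hv (funext hc)
  obtain ⟨i, hi⟩ := hex
  have h1 : ∀ a : ZMod 2, a ≠ 0 → a = 1 := by decide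
  have hone : (1 : ZMod 2) ∈ LinearMap.range (Bf n v) := by
    refine ⟨Pi.single i 1, ?_⟩
    rw [Bf_apply]
    simp [dotProduct_single, h1 _ hi]
  have hrange : LinearMap.range (Bf n v) = ⊤ := by
    rw [Submodule.eq_top_iff']
    intro x
    have := Submodule.smul_mem _ x hone
    simpa using this
  have := LinearMap.finrank_range_add_finrank_ker (Bf n v)
  rw [hrange, finrank_top, finrank_V, finrank_self] at this
  omega

noncomputable instance : Fintype (Submodule (ZMod 2) (Fin n → ZMod 2)) := by
  have : Finite (Submodule (ZMod 2) (Fin n → ZMod 2)) :=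
    Finite.of_injective (fun C => (C : Set (Fin n → ZMod 2))) SetLike.coe_injective
  exact Fintype.ofFinite _

/-- The number of `k`-dimensional subspaces of `GF(2)^n` contained in `H`. -/
noncomputable def cnt' (n k : ℕ) (H : Submodule (ZMod 2) (Fin n → ZMod 2)) : ℕ :=
  Nat.card {C : Submodule (ZMod 2) (Fin n → ZMod 2) // finrank (ZMod 2) C = k ∧ C ≤ H}

lemma cnt_eq_card_sub (k : ℕ) (H : Submodule (ZMod 2) (Fin n → ZMod 2)) :
    cnt' n k H = Nat.card {D : Submodule (ZMod 2) H // finrank (ZMod 2) D = k} := by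
  apply Nat.card_congr
  refine ⟨fun C => ⟨Submodule.comap H.subtype C.1, ?_⟩,
          fun D => ⟨Submodule.map H.subtype D.1, ?_, ?_⟩, ?_, ?_⟩
  · have hmc : Submodule.map H.subtype (Submodule.comap H.subtype C.1) = C.1 := by
      rw [Submodule.map_comap_subtype, inf_eq_right.mpr C.2.2]
    have h2 := Submodule.finrank_map_subtype_eq H (Submodule.comap H.subtype C.1)
    rw [hmc] at h2
    rw [← h2]; exact C.2.1
  · rw [Submodule.finrank_map_subtype_eq]; exact D.2
  · rw [Submodule.map_le_iff_le_comap]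
    intro x _; exact x.2
  · intro C
    ext1
    simp only
    rw [Submodule.map_comap_subtype, inf_eq_right.mpr C.2.2]
  · intro D
    ext1
    simp only
    rw [Submodule.comap_map_eq_of_injective H.injective_subtype D.1]

lemma cnt_congr (k : ℕ) (H H' : Submodule (ZMod 2) (Fin n → ZMod 2))
    (hfr : finrank (ZMod 2) H = finrank (ZMod 2) H') :
    cnt' n k H = cnt' n k H' := by
  rw [cnt_eq_card_sub, cnt_eq_card_sub]
  have e : H ≃ₗ[ZMod 2] H' := LinearEquiv.ofFinrankEq _ _ hfr
  apply Nat.card_congr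
  exact Equiv.subtypeEquiv (Submodule.orderIsoMapComap e).toEquiv (fun D => by
    have hD := LinearEquiv.finrank_map_eq e D
    exact ⟨fun h => hD.trans h, fun h => hD.symm.trans h⟩)

/-- Primal: `m`-dim subspaces containing `v` correspond to `(n-m)`-dim
subspaces inside `ker (Bf v)`, via orthogonal complement. -/
lemma primal_count (m : ℕ) (hmn : m ≤ n) (v : Fin n → ZMod 2) :
    Nat.card {C : Submodule (ZMod 2) (Fin n → ZMod 2) // finrank (ZMod 2) C = m ∧ v ∈ C}
      = cnt' n (n - m) (LinearMap.ker (Bf n v)) := by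
  apply Nat.card_congr
  have oo := LinearMap.BilinForm.orthogonal_orthogonal (Bf_nondeg (n := n)) Bf_refl
  have fro : ∀ W : Submodule (ZMod 2) (Fin n → ZMod 2),
      finrank (ZMod 2) ((Bf n).orthogonal W) = n - finrank (ZMod 2) W := fun W => by
    rw [LinearMap.BilinForm.finrank_orthogonal Bf_nondeg, finrank_V]
  refine ⟨fun C => ⟨(Bf n).orthogonal C.1, ?_, ?_⟩,
          fun D => ⟨(Bf n).orthogonal D.1, ?_, ?_⟩, ?_, ?_⟩
  · rw [fro, C.2.1]
  · intro u hu
    exact LinearMap.mem_ker.mpr (hu v C.2.2)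
  · rw [fro, D.2.1]
    omega
  · intro u hu
    have : u ∈ LinearMap.ker (Bf n v) := D.2.2 hu
    exact Bf_refl _ _ (LinearMap.mem_ker.mp this)
  · intro C; ext1; exact oo C.1
  · intro D; ext1; exact oo D.1

lemma dual_count (m : ℕ) (v : Fin n → ZMod 2) :
    Nat.card {C : Submodule (ZMod 2) (Fin n → ZMod 2) //
        finrank (ZMod 2) C = m ∧ v ∈ dualCode C}
      = cnt' n m (LinearMap.ker (Bf n v)) := by
  apply Nat.card_congr
  exact Equiv.subtypeEquivRight (fun C => by rw [mem_dualCode_iff_le_ker])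

lemma exists_subspace (m : ℕ) (hmn : m ≤ n) :
    ∃ C : Submodule (ZMod 2) (Fin n → ZMod 2), finrank (ZMod 2) C = m := by
  set f : Fin m → (Fin n → ZMod 2) := fun i => Pi.single (Fin.castLE hmn i) 1 with hf
  have hli : LinearIndependent (ZMod 2) f := by
    have hb := (Pi.basisFun (ZMod 2) (Fin n)).linearIndependent
    have := hb.comp (Fin.castLE hmn) (Fin.castLE_injective hmn)
    convert this using 1
    funext i
    simp [hf, Function.comp]
  exact ⟨Submodule.span (ZMod 2) (Set.range f), by
    rw [finrank_span_eq_card hli, Fintype.card_fin]⟩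

lemma card_norm_eq (i : ℕ) :
    #{v : Fin n → ZMod 2 | hammingNorm v = i} = n.choose i := by
  classical
  have h01 : ∀ a : ZMod 2, a ≠ 0 ↔ a = 1 := by decide
  have hpc : #((Finset.univ : Finset (Fin n)).powersetCard i) = n.choose i := by
    rw [Finset.card_powersetCard, Finset.card_univ, Fintype.card_fin]
  rw [← hpc]
  apply Finset.card_bij (fun v _ => ({j | v j ≠ 0} : Finset (Fin n)))
  · intro v hv
    simp only [Finset.mem_filter, Finset.mem_univ, true_and] at hv
    rw [Finset.mem_powersetCard]
    exact ⟨Finset.subset_univ _, hv⟩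
  · intro v hv w hw hvw
    funext j
    by_cases hj : v j = 0
    · have : j ∉ ({j | w j ≠ 0} : Finset (Fin n)) := by
        rw [← hvw]; simp [hj]
      simp only [Finset.mem_filter, Finset.mem_univ, true_and, not_not] at this
      rw [hj, this]
    · have : j ∈ ({j | w j ≠ 0} : Finset (Fin n)) := by
        rw [← hvw]; simp [hj]
      simp only [Finset.mem_filter, Finset.mem_univ, true_and] at this
      rw [(h01 _).mp hj, (h01 _).mp this]
  · intro s hs
    rw [Finset.mem_powersetCard] at hs
    refine ⟨fun j => if j ∈ s then 1 else 0, ?_, ?_⟩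
    · simp only [Finset.mem_filter, Finset.mem_univ, true_and, hammingNorm]
      rw [← hs.2]
      congr 1
      ext j
      by_cases hj : j ∈ s <;> simp [hj]
    · ext j
      by_cases hj : j ∈ s <;> simp [hj]

lemma double_count {α β : Type*} (A : Finset α) (Bs : Finset β) (P : α → β → Prop)
    [DecidablePred fun p : α × β => P p.1 p.2] [∀ a, DecidablePred (P a)]
    [∀ b, DecidablePred (P · b)] :
    ∑ a ∈ A, #{b ∈ Bs | P a b} = ∑ b ∈ Bs, #{a ∈ A | P a b} := by
  simp_rw [Finset.card_filter]
  rw [Finset.sum_comm]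

end GVAux

theorem gilbert_varshamov_type_bound (n m d dp : ℕ) (hm : 1 ≤ m) (hmn : m ≤ n - 1)
    (hd : 1 ≤ d) (hdp : 1 ≤ dp)
    (h : ((2 ^ m - 1 : ℚ) / (2 ^ n - 1)) * ∑ i ∈ Finset.Icc 1 (d - 1), (n.choose i : ℚ) +
        ((2 ^ (n - m) - 1 : ℚ) / (2 ^ n - 1)) * ∑ i ∈ Finset.Icc 1 (dp - 1), (n.choose i : ℚ)
        < 1) :
    ∃ C : Submodule (ZMod 2) (Fin n → ZMod 2),
      Module.finrank (ZMod 2) C = m ∧ MinDistGE C d ∧ MinDistGE (dualCode C) dp := by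
  classical
  open GVAux in
  by_contra hno
  push_neg at hno
  have hn1 : 1 ≤ n := by omega
  have hmn' : m ≤ n := by omega
  -- the reference nonzero vector
  set v0 : Fin n → ZMod 2 := Pi.single ⟨0, hn1⟩ 1 with hv0
  have hv0ne : v0 ≠ 0 := by
    intro hc
    have := congrFun hc ⟨0, hn1⟩
    simp [hv0] at this
  -- finsets
  set X : Finset (Submodule (ZMod 2) (Fin n → ZMod 2)) :=
    {C | Module.finrank (ZMod 2) C = m} with hX
  set S : (Fin n → ZMod 2) → Finset (Submodule (ZMod 2) (Fin n → ZMod 2)) :=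
    fun v => {C | Module.finrank (ZMod 2) C = m ∧ v ∈ C} with hS
  set T : (Fin n → ZMod 2) → Finset (Submodule (ZMod 2) (Fin n → ZMod 2)) :=
    fun v => {C | Module.finrank (ZMod 2) C = m ∧ v ∈ dualCode C} with hT
  set Vnz : Finset (Fin n → ZMod 2) := {v | v ≠ 0} with hVnz
  -- card of S v / T v as Nat.card of subtypes
  have hScard : ∀ v : Fin n → ZMod 2, (S v).card =
      Nat.card {C : Submodule (ZMod 2) (Fin n → ZMod 2) //
        Module.finrank (ZMod 2) C = m ∧ v ∈ C} := fun v => by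
    rw [Nat.card_eq_fintype_card, Fintype.card_subtype]
  have hTcard : ∀ v : Fin n → ZMod 2, (T v).card =
      Nat.card {C : Submodule (ZMod 2) (Fin n → ZMod 2) //
        Module.finrank (ZMod 2) C = m ∧ v ∈ dualCode C} := fun v => by
    rw [Nat.card_eq_fintype_card, Fintype.card_subtype]
  -- constancy of the counts over nonzero v
  have hSconst : ∀ v : Fin n → ZMod 2, v ≠ 0 → (S v).card = (S v0).card := by
    intro v hv
    rw [hScard, hScard, primal_count m hmn' v, primal_count m hmn' v0]
    exact cnt_congr _ _ _ (by
      simp only [finrank_ker_Bf hv, finrank_ker_Bf hv0ne])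
  have hTconst : ∀ v : Fin n → ZMod 2, v ≠ 0 → (T v).card = (T v0).card := by
    intro v hv
    rw [hTcard, hTcard, dual_count m v, dual_count m v0]
    exact cnt_congr _ _ _ (by
      simp only [finrank_ker_Bf hv, finrank_ker_Bf hv0ne])
  -- double counting identities
  have hcardC : ∀ C : Submodule (ZMod 2) (Fin n → ZMod 2),
      #{v ∈ Vnz | v ∈ C} = 2 ^ (Module.finrank (ZMod 2) C) - 1 := by
    intro C
    have hmemf : ({v ∈ Vnz | v ∈ C} : Finset _) = ({v | v ∈ C} : Finset _).erase 0 := by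
      ext v
      simp [hVnz, Finset.mem_erase, and_comm]
    rw [hmemf, Finset.card_erase_of_mem (by simp [C.zero_mem]),
      show #({v | v ∈ C} : Finset _) = Fintype.card C from (Fintype.card_subtype _).symm,
      card_eq_pow_finrank (K := ZMod 2), ZMod.card]
  have hVnzcard : Vnz.card = 2 ^ n - 1 := by
    have : Vnz = (Finset.univ : Finset (Fin n → ZMod 2)).erase 0 := by
      ext v; simp [hVnz]
    rw [this, Finset.card_erase_of_mem (Finset.mem_univ _), Finset.card_univ,
      card_eq_pow_finrank (K := ZMod 2), ZMod.card, finrank_V]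
  -- primal identity
  have hdc1 : ∑ v ∈ Vnz, (S v).card = X.card * (2 ^ m - 1) := by
    have := double_count Vnz X (fun v C => v ∈ C)
    have hSfilter : ∀ v, S v = {C ∈ X | v ∈ C} := by
      intro v; ext C; simp [hS, hX, and_assoc]
    calc ∑ v ∈ Vnz, (S v).card = ∑ v ∈ Vnz, #{C ∈ X | v ∈ C} := by
          simp_rw [hSfilter]
      _ = ∑ C ∈ X, #{v ∈ Vnz | v ∈ C} := this
      _ = ∑ C ∈ X, (2 ^ m - 1) := by
          apply Finset.sum_congr rfl
          intro C hC
          rw [hcardC]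
          simp only [hX, Finset.mem_filter] at hC
          rw [hC.2]
      _ = X.card * (2 ^ m - 1) := by rw [Finset.sum_const, smul_eq_mul]
  have hdc2 : ∑ v ∈ Vnz, (T v).card = X.card * (2 ^ (n - m) - 1) := by
    have := double_count Vnz X (fun v C => v ∈ dualCode C)
    have hTfilter : ∀ v, T v = {C ∈ X | v ∈ dualCode C} := by
      intro v; ext C; simp [hT, hX, and_assoc]
    calc ∑ v ∈ Vnz, (T v).card = ∑ v ∈ Vnz, #{C ∈ X | v ∈ dualCode C} := by
          simp_rw [hTfilter]
      _ = ∑ C ∈ X, #{v ∈ Vnz | v ∈ dualCode C} := this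
      _ = ∑ C ∈ X, (2 ^ (n - m) - 1) := by
          apply Finset.sum_congr rfl
          intro C hC
          have hfr : Module.finrank (ZMod 2) (dualCode C) = n - m := by
            simp only [hX, Finset.mem_filter] at hC
            rw [finrank_dualCode, hC.2]
          have : #{v ∈ Vnz | v ∈ dualCode C} =
              2 ^ (Module.finrank (ZMod 2) (dualCode C)) - 1 := hcardC (dualCode C)
          rw [this, hfr]
      _ = X.card * (2 ^ (n - m) - 1) := by rw [Finset.sum_const, smul_eq_mul]
  -- so (2^n - 1) * s = X.card * (2^m - 1), etc.
  have hs : (2 ^ n - 1) * (S v0).card = X.card * (2 ^ m - 1) := by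
    rw [← hVnzcard, ← hdc1]
    rw [Finset.sum_congr rfl (fun v hv => hSconst v (by simpa [hVnz] using hv)),
      Finset.sum_const, smul_eq_mul]
  have ht : (2 ^ n - 1) * (T v0).card = X.card * (2 ^ (n - m) - 1) := by
    rw [← hVnzcard, ← hdc2]
    rw [Finset.sum_congr rfl (fun v hv => hTconst v (by simpa [hVnz] using hv)),
      Finset.sum_const, smul_eq_mul]
  -- X is nonempty
  have hXpos : 1 ≤ X.card := by
    obtain ⟨C0, hC0⟩ := exists_subspace m hmn'
    exact Finset.card_pos.mpr ⟨C0, by simp [hX, hC0]⟩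
  -- bad vector sets
  set Bad1 : Finset (Fin n → ZMod 2) := {v | v ≠ 0 ∧ hammingNorm v ≤ d - 1} with hBad1
  set Bad2 : Finset (Fin n → ZMod 2) := {v | v ≠ 0 ∧ hammingNorm v ≤ dp - 1} with hBad2
  -- union bound
  have hsub : X ⊆ Bad1.biUnion S ∪ Bad2.biUnion T := by
    intro C hC
    simp only [hX, Finset.mem_filter, Finset.mem_univ, true_and] at hC
    rw [Finset.mem_union]
    by_cases h1 : MinDistGE C d
    · have h2 : ¬ MinDistGE (dualCode C) dp := hno C hC h1
      simp only [MinDistGE, not_forall] at h2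
      obtain ⟨c, hcC, hc0, hcw⟩ := h2
      right
      rw [Finset.mem_biUnion]
      refine ⟨c, ?_, ?_⟩
      · simp only [hBad2, Finset.mem_filter, Finset.mem_univ, true_and]
        exact ⟨hc0, by omega⟩
      · simp [hT, hC, hcC]
    · simp only [MinDistGE, not_forall] at h1
      obtain ⟨c, hcC, hc0, hcw⟩ := h1
      left
      rw [Finset.mem_biUnion]
      refine ⟨c, ?_, ?_⟩
      · simp only [hBad1, Finset.mem_filter, Finset.mem_univ, true_and]
        exact ⟨hc0, by omega⟩
      · simp [hS, hC, hcC]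
  have hXle : X.card ≤ Bad1.card * (S v0).card + Bad2.card * (T v0).card := by
    calc X.card ≤ (Bad1.biUnion S ∪ Bad2.biUnion T).card := Finset.card_le_card hsub
      _ ≤ (Bad1.biUnion S).card + (Bad2.biUnion T).card := Finset.card_union_le _ _
      _ ≤ (∑ v ∈ Bad1, (S v).card) + ∑ v ∈ Bad2, (T v).card :=
          Nat.add_le_add (Finset.card_biUnion_le) (Finset.card_biUnion_le)
      _ = Bad1.card * (S v0).card + Bad2.card * (T v0).card := by
          rw [Finset.sum_congr rfl (fun v hv => hSconst v (by
              simp only [hBad1, Finset.mem_filter] at hv; exact hv.2.1)),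
            Finset.sum_congr rfl (fun v hv => hTconst v (by
              simp only [hBad2, Finset.mem_filter] at hv; exact hv.2.1)),
            Finset.sum_const, Finset.sum_const, smul_eq_mul, smul_eq_mul]
  -- cardinality of bad sets
  have hbadcard : ∀ e : ℕ, 1 ≤ e →
      #({v : Fin n → ZMod 2 | v ≠ 0 ∧ hammingNorm v ≤ e - 1} : Finset _)
        = ∑ i ∈ Finset.Icc 1 (e - 1), n.choose i := by
    intro e he
    rw [Finset.card_eq_sum_card_fiberwise
      (f := fun v => hammingNorm v) (t := Finset.Icc 1 (e - 1)) (by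
        intro v hv
        simp only [Finset.mem_coe, Finset.mem_filter, Finset.mem_univ, true_and] at hv
        rw [Finset.mem_coe, Finset.mem_Icc]
        exact ⟨hammingNorm_pos_iff.mpr hv.1, hv.2⟩)]
    apply Finset.sum_congr rfl
    intro i hi
    rw [Finset.mem_Icc] at hi
    rw [← card_norm_eq i]
    congr 1
    ext v
    simp only [Finset.mem_filter, Finset.mem_univ, true_and]
    constructor
    · rintro ⟨-, hv⟩; exact hv
    · intro hv
      refine ⟨⟨?_, ?_⟩, hv⟩
      · rw [← hammingNorm_pos_iff, hv]; omega
      · omega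
  have hB1 : Bad1.card = ∑ i ∈ Finset.Icc 1 (d - 1), n.choose i := hbadcard d hd
  have hB2 : Bad2.card = ∑ i ∈ Finset.Icc 1 (dp - 1), n.choose i := hbadcard dp hdp
  -- final arithmetic
  set s := (S v0).card
  set t := (T v0).card
  set B1 := ∑ i ∈ Finset.Icc 1 (d - 1), n.choose i
  set B2 := ∑ i ∈ Finset.Icc 1 (dp - 1), n.choose i
  rw [hB1, hB2] at hXle
  -- (2^n - 1) ≤ B1 * (2^m - 1) + B2 * (2^(n-m) - 1) in ℕ
  have hkey : 2 ^ n - 1 ≤ B1 * (2 ^ m - 1) + B2 * (2 ^ (n - m) - 1) := by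
    have step : (2 ^ n - 1) * X.card ≤
        (B1 * (2 ^ m - 1) + B2 * (2 ^ (n - m) - 1)) * X.card := by
      calc (2 ^ n - 1) * X.card ≤ (2 ^ n - 1) * (B1 * s + B2 * t) :=
            Nat.mul_le_mul_left _ hXle
        _ = B1 * ((2 ^ n - 1) * s) + B2 * ((2 ^ n - 1) * t) := by ring
        _ = B1 * (X.card * (2 ^ m - 1)) + B2 * (X.card * (2 ^ (n - m) - 1)) := by
            rw [hs, ht]
        _ = (B1 * (2 ^ m - 1) + B2 * (2 ^ (n - m) - 1)) * X.card := by ring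
    exact Nat.le_of_mul_le_mul_right step (by omega)
  -- contradiction with h
  have hc : (0 : ℚ) < 2 ^ n - 1 := by
    have : (2 : ℚ) ≤ 2 ^ n := by
      calc (2 : ℚ) = 2 ^ 1 := (pow_one 2).symm
        _ ≤ 2 ^ n := pow_le_pow_right₀ (by norm_num) hn1
    linarith
  rw [div_mul_eq_mul_div, div_mul_eq_mul_div, ← add_div, div_lt_one hc] at h
  have hcast : ((2 ^ n - 1 : ℕ) : ℚ) ≤
      ((B1 * (2 ^ m - 1) + B2 * (2 ^ (n - m) - 1) : ℕ) : ℚ) := by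
    exact_mod_cast hkey
  have h2m : (1 : ℕ) ≤ 2 ^ m := Nat.one_le_two_pow
  have h2nm : (1 : ℕ) ≤ 2 ^ (n - m) := Nat.one_le_two_pow
  have h2n : (1 : ℕ) ≤ 2 ^ n := Nat.one_le_two_pow
  have hBq1 : ((B1 : ℕ) : ℚ) = ∑ i ∈ Finset.Icc 1 (d - 1), (n.choose i : ℚ) := by
    push_cast [B1]; rfl
  have hBq2 : ((B2 : ℕ) : ℚ) = ∑ i ∈ Finset.Icc 1 (dp - 1), (n.choose i : ℚ) := by
    push_cast [B2]; rfl
  rw [Nat.cast_add, Nat.cast_mul, Nat.cast_mul, Nat.cast_sub h2m, Nat.cast_sub h2nm,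
    Nat.cast_sub h2n, hBq1, hBq2] at hcast
  push_cast at hcast
  nlinarith [hcast, h]
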